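/- Let G be a finite group acting on F^n by permuting coordinates via a homomorphism into GL_n(F), and let Z ⊆ F^n be a finite G-stable point set. Then the vanishing ideal I(Z) and its associated graded ideal gr I(Z) are G-stable ideals of S = F[x_1,...,x_n], so G acts on the quotient ring R(Z) = S/gr I(Z), and if #G is invertible in F then R(Z) ≅ F[Z] as (ungraded) G-modules, where F[Z] is the permutation module on Z. -/

import Mathlib

/-- The vanishing ideal of a set of points of `F^n`. -/
noncomputable def vanishingIdeal (F : Type*) [Field F] {σ : Type*} (Z : Set (σ → F)) :
    Ideal (MvPolynomial σ F) :=
  ⨅ z ∈ Z, RingHom.ker (MvPolynomial.eval z)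

/-- The associated graded ideal `gr I(Z)`, generated by the top-degree
homogeneous components of the nonzero elements of `I(Z)`. -/
noncomputable def grIdeal (F : Type*) [Field F] {σ : Type*} (Z : Set (σ → F)) :
    Ideal (MvPolynomial σ F) :=
  Ideal.span {g | ∃ f ∈ vanishingIdeal F Z, f ≠ 0 ∧
    g = MvPolynomial.homogeneousComponent f.totalDegree f}

section Aux

open MvPolynomial

variable {F : Type*} [Field F] {n : ℕ}

theorem aux_mem_vanishing {Z : Set (Fin n → F)} {f : MvPolynomial (Fin n) F} :
    f ∈ _root_.vanishingIdeal F Z ↔ ∀ z ∈ Z, eval z f = 0 := by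
  unfold _root_.vanishingIdeal
  simp [Submodule.mem_iInf, RingHom.mem_ker]

theorem aux_rename_perm_mul (a b : Equiv.Perm (Fin n)) (f : MvPolynomial (Fin n) F) :
    rename (⇑a) (rename (⇑b) f) = rename (⇑(a * b)) f := by
  rw [rename_rename]; rfl

theorem aux_totalDegree_rename (a : Equiv.Perm (Fin n)) (f : MvPolynomial (Fin n) F) :
    (rename (⇑a) f).totalDegree = f.totalDegree := by
  refine le_antisymm (totalDegree_rename_le _ _) ?_
  have : rename (⇑a⁻¹) (rename (⇑a) f) = f := by
    rw [aux_rename_perm_mul, inv_mul_cancel, Equiv.Perm.coe_one, rename_id, AlgHom.id_apply]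
  conv_lhs => rw [← this]
  exact totalDegree_rename_le _ _

theorem aux_degree_sum (s : Fin n →₀ ℕ) : s.degree = s.sum fun _ e => e := rfl

theorem aux_homComp_rename (a : Equiv.Perm (Fin n)) (d : ℕ) (f : MvPolynomial (Fin n) F) :
    homogeneousComponent d (rename (⇑a) f) = rename (⇑a) (homogeneousComponent d f) := by
  ext m
  set m' : Fin n →₀ ℕ := m.mapDomain ⇑a⁻¹ with hm'
  have hm : m'.mapDomain ⇑a = m := by
    rw [hm', ← Finsupp.mapDomain_comp]
    have : (⇑a ∘ ⇑a⁻¹) = id := by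
      funext i; simp
    rw [this, Finsupp.mapDomain_id]
  have hdeg : (Finsupp.mapDomain (⇑a) m').degree = m'.degree := by
    rw [aux_degree_sum, aux_degree_sum,
      Finsupp.sum_mapDomain_index (fun _ => rfl) (fun _ _ _ => rfl)]
  rw [← hm, coeff_rename_mapDomain _ a.injective, coeff_homogeneousComponent,
    coeff_homogeneousComponent, coeff_rename_mapDomain _ a.injective, hdeg]

theorem aux_leading_ne_zero {f : MvPolynomial (Fin n) F} (hf : f ≠ 0) :
    homogeneousComponent f.totalDegree f ≠ 0 := by
  obtain ⟨m, hm, hdeg⟩ := Finset.exists_mem_eq_sup f.support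
    (support_nonempty.2 hf) fun s => s.sum fun _ e => e
  intro h0
  have : coeff m (homogeneousComponent f.totalDegree f) = coeff m f := by
    rw [coeff_homogeneousComponent, if_pos]
    rw [aux_degree_sum, ← hdeg]; rfl
  rw [h0, coeff_zero] at this
  exact (mem_support_iff.1 hm) this.symm

theorem aux_homComp_mul {k : ℕ} {h : MvPolynomial (Fin n) F} (hh : h.IsHomogeneous k)
    (f : MvPolynomial (Fin n) F) (e : ℕ) :
    homogeneousComponent e (h * f) =
      if k ≤ e then h * homogeneousComponent (e - k) f else 0 := by
  have key : ∀ j, homogeneousComponent e (h * homogeneousComponent j f)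
      = if k + j = e then h * homogeneousComponent j f else 0 := by
    intro j
    have hmem : h * homogeneousComponent j f ∈
        homogeneousSubmodule (Fin n) F (k + j) :=
      (mem_homogeneousSubmodule _ _).2 (hh.mul (homogeneousComponent_isHomogeneous j f))
    rw [homogeneousComponent_of_mem hmem]
    by_cases hc : k + j = e
    · rw [if_pos hc.symm, if_pos hc]
    · rw [if_neg (fun hc' => hc hc'.symm), if_neg hc]
  conv_lhs => rw [← sum_homogeneousComponent f, Finset.mul_sum, map_sum]
  simp_rw [key]
  by_cases hke : k ≤ e
  · have hcond : ∀ j, (k + j = e) ↔ (j = e - k) := by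
      intro j; omega
    simp_rw [hcond]
    rw [Finset.sum_ite_eq' (Finset.range (f.totalDegree + 1))
      (e - k) (fun j => h * homogeneousComponent j f)]
    rw [if_pos hke]
    by_cases hmem : e - k ∈ Finset.range (f.totalDegree + 1)
    · rw [if_pos hmem]
    · rw [if_neg hmem]
      have : f.totalDegree < e - k := by
        simp at hmem; omega
      rw [homogeneousComponent_eq_zero _ _ this, mul_zero]
  · rw [if_neg hke]
    apply Finset.sum_eq_zero
    intro j _
    rw [if_neg (by omega)]

variable {G : Type*} [Group G] (φ : G →* Equiv.Perm (Fin n))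

theorem aux_I_stable {Z : Set (Fin n → F)}
    (hZstable : ∀ (g : G), ∀ z ∈ Z, (fun i => z ((φ g)⁻¹ i)) ∈ Z)
    (g : G) {f : MvPolynomial (Fin n) F} (hf : f ∈ _root_.vanishingIdeal F Z) :
    rename (⇑(φ g)) f ∈ _root_.vanishingIdeal F Z := by
  rw [aux_mem_vanishing] at hf ⊢
  intro z hz
  rw [eval_rename]
  have hmem := hZstable g⁻¹ z hz
  have : (fun i => z ((φ g⁻¹)⁻¹ i)) = z ∘ ⇑(φ g) := by
    funext i
    simp [map_inv]
  rw [this] at hmem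
  exact hf _ hmem

theorem aux_J_stable {Z : Set (Fin n → F)}
    (hZstable : ∀ (g : G), ∀ z ∈ Z, (fun i => z ((φ g)⁻¹ i)) ∈ Z)
    (g : G) {f : MvPolynomial (Fin n) F} (hf : f ∈ _root_.grIdeal F Z) :
    rename (⇑(φ g)) f ∈ _root_.grIdeal F Z := by
  have hmap : Ideal.map (rename (⇑(φ g)) : MvPolynomial (Fin n) F →ₐ[F] MvPolynomial (Fin n) F)
      (_root_.grIdeal F Z) ≤ _root_.grIdeal F Z := by
    rw [_root_.grIdeal, Ideal.map_span]
    apply Ideal.span_le.2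
    rintro y ⟨x, ⟨u, hu, hune, rfl⟩, rfl⟩
    apply Ideal.subset_span
    refine ⟨rename (⇑(φ g)) u, aux_I_stable φ hZstable g hu, ?_, ?_⟩
    · intro h0
      exact hune (rename_injective _ (φ g).injective (by rw [h0, map_zero]))
    · rw [aux_totalDegree_rename, aux_homComp_rename]
  exact hmap (Ideal.mem_map_of_mem _ hf)

/-- The space of top-degree components of elements of `I(Z)` of degree `≤ d`,
homogeneous of degree `d`. -/
def Wmod (F : Type*) [Field F] {n : ℕ} (Z : Set (Fin n → F)) (d : ℕ) :
    Submodule F (MvPolynomial (Fin n) F) where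
  carrier := {g | ∃ u ∈ _root_.vanishingIdeal F Z, u.totalDegree ≤ d ∧
    g = homogeneousComponent d u}
  zero_mem' := ⟨0, zero_mem _, by simp, by simp⟩
  add_mem' := by
    rintro a b ⟨u, hu, hdu, rfl⟩ ⟨v, hv, hdv, rfl⟩
    exact ⟨u + v, add_mem hu hv,
      le_trans (totalDegree_add u v) (max_le hdu hdv), (map_add _ _ _).symm⟩
  smul_mem' := by
    rintro c a ⟨u, hu, hdu, rfl⟩
    refine ⟨c • u, ?_, le_trans (totalDegree_smul_le c u) hdu, (map_smul _ _ _).symm⟩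
    rw [smul_eq_C_mul]
    exact Ideal.mul_mem_left _ _ hu

theorem aux_Wmod_le_homog {Z : Set (Fin n → F)} (d : ℕ) :
    Wmod F Z d ≤ homogeneousSubmodule (Fin n) F d := by
  rintro g ⟨u, hu, hdu, rfl⟩
  exact homogeneousComponent_mem d u

theorem aux_Wmod_le_grIdeal {Z : Set (Fin n → F)} (d : ℕ) :
    ∀ g ∈ Wmod F Z d, g ∈ _root_.grIdeal F Z := by
  rintro g ⟨u, hu, hdu, rfl⟩
  by_cases h0 : homogeneousComponent d u = 0
  · rw [h0]; exact zero_mem _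
  · have hune : u ≠ 0 := by rintro rfl; simp at h0
    have hdeq : u.totalDegree = d := by
      refine le_antisymm hdu ?_
      by_contra hlt
      exact h0 (homogeneousComponent_eq_zero _ _ (by omega))
    exact Ideal.subset_span ⟨u, hu, hune, by rw [hdeq]⟩

theorem aux_Wmod_mul {Z : Set (Fin n → F)} {k d : ℕ} {h : MvPolynomial (Fin n) F}
    (hh : h.IsHomogeneous k) {g : MvPolynomial (Fin n) F} (hg : g ∈ Wmod F Z d) :
    h * g ∈ Wmod F Z (k + d) := by
  obtain ⟨u, hu, hdu, rfl⟩ := hg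
  refine ⟨h * u, Ideal.mul_mem_left _ _ hu, ?_, ?_⟩
  · exact le_trans (totalDegree_mul h u) (by
      have := hh.totalDegree_le
      omega)
  · rw [aux_homComp_mul hh u (k + d), if_pos (Nat.le_add_right k d),
      Nat.add_sub_cancel_left]

theorem aux_Wmod_stable {Z : Set (Fin n → F)}
    (hZstable : ∀ (g : G), ∀ z ∈ Z, (fun i => z ((φ g)⁻¹ i)) ∈ Z)
    (g : G) (d : ℕ) {x : MvPolynomial (Fin n) F} (hx : x ∈ Wmod F Z d) :
    rename (⇑(φ g)) x ∈ Wmod F Z d := by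
  obtain ⟨u, hu, hdu, rfl⟩ := hx
  exact ⟨rename (⇑(φ g)) u, aux_I_stable φ hZstable g hu,
    by rw [aux_totalDegree_rename]; exact hdu, (aux_homComp_rename _ _ _).symm⟩

theorem aux_J_comps {Z : Set (Fin n → F)} :
    ∀ f ∈ _root_.grIdeal F Z, ∀ e, homogeneousComponent e f ∈ Wmod F Z e := by
  have hK : ∃ K : Ideal (MvPolynomial (Fin n) F),
      K.carrier = {f | ∀ e, homogeneousComponent e f ∈ Wmod F Z e} := by
    refine ⟨⟨⟨⟨{f | ∀ e, homogeneousComponent e f ∈ Wmod F Z e}, ?_⟩, ?_⟩, ?_⟩, rfl⟩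
    · intro a b ha hb e
      rw [map_add]
      exact add_mem (ha e) (hb e)
    · intro e
      rw [map_zero]
      exact zero_mem _
    · intro c f hf e
      show homogeneousComponent e (c * f) ∈ Wmod F Z e
      have hrw : c * f = ∑ j ∈ Finset.range (c.totalDegree + 1),
          homogeneousComponent j c * f := by
        rw [← Finset.sum_mul, sum_homogeneousComponent]
      rw [hrw, map_sum]
      apply Submodule.sum_mem
      intro j _
      rw [aux_homComp_mul (homogeneousComponent_isHomogeneous j c) f e]
      by_cases hje : j ≤ e
      · rw [if_pos hje]
        have := aux_Wmod_mul (Z := Z)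
          (homogeneousComponent_isHomogeneous j c) (hf (e - j))
        rwa [Nat.add_sub_cancel' hje] at this
      · rw [if_neg hje]
        exact zero_mem _
  obtain ⟨K, hKcar⟩ := hK
  have hmem : ∀ x, x ∈ K ↔ ∀ e, homogeneousComponent e x ∈ Wmod F Z e := by
    intro x
    constructor
    · intro hx; have : x ∈ K.carrier := hx; rwa [hKcar] at this
    · intro hx; show x ∈ K.carrier; rw [hKcar]; exact hx
  intro f hf
  rw [← hmem]
  refine Ideal.span_le.2 ?_ hf
  rintro x ⟨u, hu, hune, rfl⟩
  rw [SetLike.mem_coe, hmem]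
  intro e
  rcases eq_or_ne e u.totalDegree with rfl | hne
  · rw [homogeneousComponent_of_mem (homogeneousComponent_mem _ u), if_pos rfl]
    exact ⟨u, hu, le_rfl, rfl⟩
  · rw [homogeneousComponent_of_mem (homogeneousComponent_mem _ u), if_neg hne]
    exact zero_mem _

/-- Maschke-style averaging: a `G`-stable complement of a stable subspace
inside a stable subspace. -/
theorem aux_stable_compl {G : Type*} [Group G] [Fintype G]
    (hcard : (Fintype.card G : F) ≠ 0)
    {S' : Type*} [AddCommGroup S'] [Module F S'] (ρ : G → Module.End F S')
    (hmul : ∀ a b x, ρ a (ρ b x) = ρ (a * b) x) (hone : ∀ x, ρ 1 x = x)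
    (W Sd : Submodule F S') (hWS : W ≤ Sd)
    (hWst : ∀ g, ∀ x ∈ W, ρ g x ∈ W) (hSst : ∀ g, ∀ x ∈ Sd, ρ g x ∈ Sd) :
    ∃ Hd : Submodule F S', Hd ≤ Sd ∧ (∀ g, ∀ x ∈ Hd, ρ g x ∈ Hd) ∧
      Hd ⊓ W = ⊥ ∧ Hd ⊔ W = Sd := by
  classical
  obtain ⟨C, hC⟩ := W.exists_isCompl
  set π' : S' →ₗ[F] S' := W.subtype ∘ₗ Submodule.linearProjOfIsCompl W C hC with hπ'
  have hπ'W : ∀ x, π' x ∈ W := fun x => (Submodule.linearProjOfIsCompl W C hC x).2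
  have hπ'id : ∀ x ∈ W, π' x = x := fun x hx =>
    congrArg W.subtype (Submodule.linearProjOfIsCompl_apply_left hC ⟨x, hx⟩)
  set Q : S' →ₗ[F] S' :=
    (Fintype.card G : F)⁻¹ • ∑ g : G, (ρ g) ∘ₗ π' ∘ₗ (ρ g⁻¹) with hQdef
  have hQapp : ∀ x, Q x = (Fintype.card G : F)⁻¹ •
      ∑ g : G, ρ g (π' (ρ g⁻¹ x)) := by
    intro x
    rw [hQdef]
    simp [LinearMap.sum_apply]
  have hQW : ∀ x, Q x ∈ W := by
    intro x
    rw [hQapp]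
    exact Submodule.smul_mem _ _ (Submodule.sum_mem _ fun g _ =>
      hWst g _ (hπ'W _))
  have hQid : ∀ x ∈ W, Q x = x := by
    intro x hx
    rw [hQapp]
    have : ∀ g : G, ρ g (π' (ρ g⁻¹ x)) = x := by
      intro g
      rw [hπ'id _ (hWst g⁻¹ x hx), hmul, mul_inv_cancel, hone]
    rw [Finset.sum_congr rfl fun g _ => this g, Finset.sum_const, Finset.card_univ,
      ← Nat.cast_smul_eq_nsmul F, smul_smul, inv_mul_cancel₀ hcard, one_smul]
  have hQcomm : ∀ g x, Q (ρ g x) = ρ g (Q x) := by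
    intro g x
    rw [hQapp, hQapp, map_smul, map_sum]
    congr 1
    refine Fintype.sum_equiv (Equiv.mulLeft g⁻¹) _ _ ?_
    intro b
    show ρ b (π' (ρ b⁻¹ (ρ g x))) = ρ g (ρ (g⁻¹ * b) (π' (ρ (g⁻¹ * b)⁻¹ x)))
    rw [hmul b⁻¹ g x, hmul g (g⁻¹ * b), show g * (g⁻¹ * b) = b by group,
      show (g⁻¹ * b)⁻¹ = b⁻¹ * g by group]
  refine ⟨LinearMap.ker Q ⊓ Sd, inf_le_right, ?_, ?_, ?_⟩
  · rintro g x ⟨hk, hs⟩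
    refine ⟨?_, hSst g x hs⟩
    show Q (ρ g x) = 0
    rw [hQcomm, show Q x = 0 from hk, map_zero]
  · rw [eq_bot_iff]
    rintro x ⟨⟨hk, _⟩, hw⟩
    have hx : Q x = x := hQid x hw
    rw [show Q x = 0 from hk] at hx
    rw [Submodule.mem_bot]
    exact hx.symm
  · refine le_antisymm (sup_le inf_le_right hWS) ?_
    intro x hx
    have hQQ : Q (x - Q x) = 0 := by
      rw [map_sub, hQid _ (hQW x), sub_self]
    refine Submodule.mem_sup.2 ⟨x - Q x, ⟨hQQ, Submodule.sub_mem _ hx (hWS (hQW x))⟩,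
      Q x, hQW x, by abel⟩

theorem aux_eval_surjective {Z : Set (Fin n → F)} (hZfin : Z.Finite) (w : Z → F) :
    ∃ f : MvPolynomial (Fin n) F, ∀ z : Z, eval (z : Fin n → F) f = w z := by
  classical
  haveI : Fintype Z := hZfin.fintype
  have ind : ∀ z₀ : Z, ∃ f : MvPolynomial (Fin n) F,
      eval (z₀ : Fin n → F) f = 1 ∧ ∀ z : Z, z ≠ z₀ → eval (z : Fin n → F) f = 0 := by
    intro z₀
    refine ⟨∏ y ∈ Finset.univ.erase z₀,
      if h : ∃ i, (z₀ : Fin n → F) i ≠ (y : Fin n → F) i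
      then (X h.choose - C ((y : Fin n → F) h.choose)) *
        C (((z₀ : Fin n → F) h.choose - (y : Fin n → F) h.choose)⁻¹)
      else 1, ?_, ?_⟩
    · rw [map_prod]
      apply Finset.prod_eq_one
      intro y _
      by_cases h : ∃ i, (z₀ : Fin n → F) i ≠ (y : Fin n → F) i
      · rw [dif_pos h]
        simp only [map_mul, map_sub, eval_X, eval_C]
        exact mul_inv_cancel₀ (sub_ne_zero.2 h.choose_spec)
      · rw [dif_neg h, map_one]
    · intro z hz
      rw [map_prod]
      apply Finset.prod_eq_zero (Finset.mem_erase.2 ⟨hz, Finset.mem_univ z⟩)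
      have h : ∃ i, (z₀ : Fin n → F) i ≠ (z : Fin n → F) i := by
        by_contra hc
        push_neg at hc
        exact hz (Subtype.ext (funext fun i => hc i)).symm
      rw [dif_pos h]
      simp only [map_mul, map_sub, eval_X, eval_C]
      rw [sub_self, zero_mul]
  choose p hp1 hp0 using ind
  refine ⟨∑ z₀ : Z, C (w z₀) * p z₀, fun z => ?_⟩
  rw [map_sum, Finset.sum_eq_single z]
  · rw [map_mul, eval_C, hp1, mul_one]
  · intro y _ hy
    rw [map_mul, eval_C, hp0 y z (Ne.symm hy), mul_zero]
  · intro h; exact absurd (Finset.mem_univ z) h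

end Aux

/-- let a finite group `G` act on `F^n` by permuting coordinates
via `φ : G →* Perm (Fin n)` (so `(g • z) i = z ((φ g)⁻¹ i)`), and let `Z` be a
finite `G`-stable point set.  Then `I(Z)` and `gr I(Z)` are stable under the
substitution action `f ↦ rename (φ g) f` of `G` on `S = F[x_1,…,x_n]` (so `G`
acts on `R(Z) = S/gr I(Z)`), and if `#G` is invertible in `F` then
`R(Z) ≅ F[Z]` as (ungraded) `G`-modules, where `F[Z]` is the permutation module
of functions on `Z` with `(g • h)(z) = h(g⁻¹ • z)`. -/
theorem orbit_harmonics_equivariant (F : Type*) [Field F] {n : ℕ}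
    {G : Type*} [Group G] [Fintype G] (φ : G →* Equiv.Perm (Fin n))
    (Z : Set (Fin n → F)) (hZfin : Z.Finite)
    (hZstable : ∀ (g : G), ∀ z ∈ Z, (fun i => z ((φ g)⁻¹ i)) ∈ Z) :
    (∀ (g : G), ∀ f ∈ vanishingIdeal F Z,
      MvPolynomial.rename (φ g) f ∈ vanishingIdeal F Z) ∧
    (∀ (g : G), ∀ f ∈ grIdeal F Z,
      MvPolynomial.rename (φ g) f ∈ grIdeal F Z) ∧
    ((Fintype.card G : F) ≠ 0 →
      ∃ e : (MvPolynomial (Fin n) F ⧸ grIdeal F Z) ≃ₗ[F] (Z → F),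
        ∀ (g : G) (f : MvPolynomial (Fin n) F) (z z' : Z),
          (z' : Fin n → F) = (fun i => (z : Fin n → F) (φ g i)) →
          e (Ideal.Quotient.mk _ (MvPolynomial.rename (φ g) f)) z
            = e (Ideal.Quotient.mk _ f) z') := by
  classical
  refine ⟨fun g f hf => aux_I_stable φ hZstable g hf,
    fun g f hf => aux_J_stable φ hZstable g hf, fun hcard => ?_⟩
  let ρ : G → Module.End F (MvPolynomial (Fin n) F) := fun g =>
    (MvPolynomial.rename (⇑(φ g)) :
      MvPolynomial (Fin n) F →ₐ[F] MvPolynomial (Fin n) F).toLinearMap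
  have hmul : ∀ a b x, ρ a (ρ b x) = ρ (a * b) x := by
    intro a b x
    show MvPolynomial.rename (⇑(φ a)) (MvPolynomial.rename (⇑(φ b)) x) = _
    rw [aux_rename_perm_mul, ← map_mul]
    rfl
  have hone : ∀ x, ρ 1 x = x := by
    intro x
    show MvPolynomial.rename (⇑(φ 1)) x = x
    rw [map_one, Equiv.Perm.coe_one, MvPolynomial.rename_id, AlgHom.id_apply]
  have hex : ∀ d : ℕ, ∃ Hd : Submodule F (MvPolynomial (Fin n) F),
      Hd ≤ MvPolynomial.homogeneousSubmodule (Fin n) F d ∧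
      (∀ g, ∀ x ∈ Hd, ρ g x ∈ Hd) ∧ Hd ⊓ Wmod F Z d = ⊥ ∧
      Hd ⊔ Wmod F Z d = MvPolynomial.homogeneousSubmodule (Fin n) F d := by
    intro d
    refine aux_stable_compl hcard ρ hmul hone _ _ (aux_Wmod_le_homog d) ?_ ?_
    · intro g x hx
      exact aux_Wmod_stable φ hZstable g d hx
    · intro g x hx
      rw [MvPolynomial.mem_homogeneousSubmodule] at hx ⊢
      exact MvPolynomial.IsHomogeneous.rename_isHomogeneous hx
  choose Hd hHle hHst hHbot hHsup using hex
  set H : Submodule F (MvPolynomial (Fin n) F) := ⨆ d, Hd d with hHdefn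
  have hHd_le : ∀ d, Hd d ≤ H := fun d => le_iSup Hd d
  have hHcomp : ∀ x ∈ H, ∀ e, MvPolynomial.homogeneousComponent e x ∈ Hd e := by
    intro x hx
    refine Submodule.iSup_induction Hd
      (motive := fun y => ∀ e, MvPolynomial.homogeneousComponent e y ∈ Hd e) hx ?_ ?_ ?_
    · intro i y hy e
      rw [MvPolynomial.homogeneousComponent_of_mem (hHle i hy)]
      by_cases hei : e = i
      · subst hei
        rw [if_pos rfl]
        exact hy
      · rw [if_neg hei]
        exact zero_mem _
    · intro e
      rw [map_zero]
      exact zero_mem _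
    · intro a b ha hb e
      rw [map_add]
      exact add_mem (ha e) (hb e)
  have hHstable : ∀ g, ∀ x ∈ H, ρ g x ∈ H := by
    intro g x hx
    refine Submodule.iSup_induction Hd (motive := fun y => ρ g y ∈ H) hx ?_ ?_ ?_
    · intro i y hy
      exact hHd_le i (hHst i g y hy)
    · show ρ g (0 : MvPolynomial (Fin n) F) ∈ H
      rw [map_zero]; exact zero_mem _
    · intro a b ha hb
      show ρ g (a + b) ∈ H
      rw [map_add]; exact add_mem ha hb
  have hHJ : ∀ x ∈ H, x ∈ grIdeal F Z → x = 0 := by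
    intro x hx hj
    have hcomps : ∀ e, MvPolynomial.homogeneousComponent e x = 0 := by
      intro e
      have hmem : MvPolynomial.homogeneousComponent e x ∈ Hd e ⊓ Wmod F Z e :=
        ⟨hHcomp x hx e, aux_J_comps x hj e⟩
      rw [hHbot e] at hmem
      exact (Submodule.mem_bot F).1 hmem
    rw [← MvPolynomial.sum_homogeneousComponent x]
    exact Finset.sum_eq_zero fun i _ => hcomps i
  have hsplitJ : ∀ f : MvPolynomial (Fin n) F, ∃ h ∈ H, f - h ∈ grIdeal F Z := by
    intro f
    have hsp : ∀ e : ℕ, ∃ h ∈ Hd e, ∃ w ∈ Wmod F Z e,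
        MvPolynomial.homogeneousComponent e f = h + w := by
      intro e
      have hmem : MvPolynomial.homogeneousComponent e f ∈ Hd e ⊔ Wmod F Z e := by
        rw [hHsup e]
        exact MvPolynomial.homogeneousComponent_mem e f
      obtain ⟨h, hh, w, hw, heq⟩ := Submodule.mem_sup.1 hmem
      exact ⟨h, hh, w, hw, heq.symm⟩
    choose hcomp hhmem wcomp hwmem heq using hsp
    obtain ⟨s, hsdef⟩ : ∃ s : Finset ℕ, s = Finset.range (f.totalDegree + 1) := ⟨_, rfl⟩
    have hfsum : f = ∑ e ∈ s, (hcomp e + wcomp e) := by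
      rw [hsdef]
      conv_lhs => rw [← MvPolynomial.sum_homogeneousComponent f]
      exact Finset.sum_congr rfl fun e _ => heq e
    refine ⟨∑ e ∈ s, hcomp e,
      Submodule.sum_mem _ fun e _ => hHd_le e (hhmem e), ?_⟩
    have hfeq : f - ∑ e ∈ s, hcomp e = ∑ e ∈ s, wcomp e := by
      rw [hfsum, Finset.sum_add_distrib]
      abel
    rw [hfeq]
    exact Submodule.sum_mem _ fun e _ => aux_Wmod_le_grIdeal e _ (hwmem e)
  have hsplitI : ∀ f : MvPolynomial (Fin n) F,
      ∃ h ∈ H, ∃ u ∈ vanishingIdeal F Z, f = h + u := by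
    have key : ∀ N : ℕ, ∀ f : MvPolynomial (Fin n) F, f.totalDegree < N →
        ∃ h ∈ H, ∃ u ∈ vanishingIdeal F Z, f = h + u := by
      intro N
      induction N using Nat.strong_induction_on with
      | _ N ih =>
        intro f hfN
        by_cases hf0 : f = 0
        · exact ⟨0, zero_mem _, 0, zero_mem _, by rw [hf0]; simp⟩
        · have hmem : MvPolynomial.homogeneousComponent f.totalDegree f ∈
              Hd f.totalDegree ⊔ Wmod F Z f.totalDegree := by
            rw [hHsup f.totalDegree]
            exact MvPolynomial.homogeneousComponent_mem f.totalDegree f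
          obtain ⟨h, hh, w, hw, heq⟩ := Submodule.mem_sup.1 hmem
          obtain ⟨u, hu, hdu, hwu⟩ := hw
          have hcomps : ∀ e, f.totalDegree ≤ e →
              MvPolynomial.homogeneousComponent e (f - h - u) = 0 := by
            intro e hde
            rw [map_sub, map_sub]
            rcases eq_or_lt_of_le hde with rfl | hlt
            · have e1 : MvPolynomial.homogeneousComponent f.totalDegree h = h := by
                rw [MvPolynomial.homogeneousComponent_of_mem (hHle f.totalDegree hh),
                  if_pos rfl]
              rw [← heq, e1, ← hwu]
              abel
            · rw [MvPolynomial.homogeneousComponent_eq_zero e f hlt,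
                MvPolynomial.homogeneousComponent_of_mem (hHle f.totalDegree hh),
                if_neg (by omega),
                MvPolynomial.homogeneousComponent_eq_zero e u (by omega)]
              simp
          have hne : f - h - u = 0 ∨ (f - h - u).totalDegree < f.totalDegree := by
            by_cases h0 : f - h - u = 0
            · exact Or.inl h0
            · right
              by_contra hge
              push_neg at hge
              exact aux_leading_ne_zero h0 (hcomps _ hge)
          rcases hne with h0 | hlt
          · refine ⟨h, hHd_le _ hh, u, hu, ?_⟩
            rw [sub_sub] at h0
            exact (sub_eq_zero.1 h0)
          · obtain ⟨h', hh', u', hu', heq'⟩ := ih f.totalDegree hfN _ hlt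
            refine ⟨h + h', add_mem (hHd_le _ hh) hh', u + u', add_mem hu hu', ?_⟩
            have hfd : f = (f - h - u) + h + u := by abel
            rw [hfd, heq']
            abel
    exact fun f => key (f.totalDegree + 1) f (by omega)
  have hHI : ∀ x ∈ H, x ∈ vanishingIdeal F Z → x = 0 := by
    intro x hx hI
    by_contra h0
    have hW : MvPolynomial.homogeneousComponent x.totalDegree x ∈
        Wmod F Z x.totalDegree := ⟨x, hI, le_rfl, rfl⟩
    have hmem : MvPolynomial.homogeneousComponent x.totalDegree x ∈
        Hd x.totalDegree ⊓ Wmod F Z x.totalDegree := ⟨hHcomp x hx _, hW⟩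
    rw [hHbot x.totalDegree] at hmem
    exact aux_leading_ne_zero h0 ((Submodule.mem_bot F).1 hmem)
  -- build the two linear equivalences
  let mkl : MvPolynomial (Fin n) F →ₗ[F] (MvPolynomial (Fin n) F ⧸ grIdeal F Z) :=
    (Ideal.Quotient.mkₐ F (grIdeal F Z)).toLinearMap
  let umap : H →ₗ[F] (MvPolynomial (Fin n) F ⧸ grIdeal F Z) := mkl.comp H.subtype
  have humap : ∀ x : H, umap x
      = Ideal.Quotient.mk (grIdeal F Z) (x : MvPolynomial (Fin n) F) := fun _ => rfl
  have hubij : Function.Bijective umap := by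
    constructor
    · intro x y hxy
      rw [humap, humap, Ideal.Quotient.mk_eq_mk_iff_sub_mem] at hxy
      exact Subtype.ext (sub_eq_zero.1 (hHJ _ (sub_mem x.2 y.2) hxy))
    · intro y
      obtain ⟨f, rfl⟩ := Ideal.Quotient.mk_surjective y
      obtain ⟨h, hh, hfh⟩ := hsplitJ f
      refine ⟨⟨h, hh⟩, ?_⟩
      rw [humap, Ideal.Quotient.mk_eq_mk_iff_sub_mem]
      have : h - f = -(f - h) := by abel
      rw [this]
      exact neg_mem hfh
  let evl : MvPolynomial (Fin n) F →ₗ[F] (Z → F) :=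
    { toFun := fun f z => MvPolynomial.eval (z : Fin n → F) f,
      map_add' := fun a b => funext fun z => by simp,
      map_smul' := fun c a => funext fun z => by
        simp [MvPolynomial.smul_eval] }
  let vmap : H →ₗ[F] (Z → F) := evl.comp H.subtype
  have hvmap : ∀ (x : H) (z : Z), vmap x z
      = MvPolynomial.eval (z : Fin n → F) (x : MvPolynomial (Fin n) F) :=
    fun _ _ => rfl
  have hvbij : Function.Bijective vmap := by
    constructor
    · intro x y hxy
      apply Subtype.ext
      have hsub : ((x : MvPolynomial (Fin n) F) - y) ∈ vanishingIdeal F Z := by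
        rw [aux_mem_vanishing]
        intro z hz
        have hxyz := congrFun hxy ⟨z, hz⟩
        rw [hvmap, hvmap] at hxyz
        rw [map_sub, hxyz, sub_self]
      exact sub_eq_zero.1 (hHI _ (sub_mem x.2 y.2) hsub)
    · intro w
      obtain ⟨f, hf⟩ := aux_eval_surjective hZfin w
      obtain ⟨h, hh, u, hu, hfhu⟩ := hsplitI f
      refine ⟨⟨h, hh⟩, funext fun z => ?_⟩
      rw [hvmap]
      have h0 : MvPolynomial.eval (z : Fin n → F) u = 0 :=
        (aux_mem_vanishing.1 hu) z z.2
      have hfz := hf z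
      rw [hfhu, map_add, h0, add_zero] at hfz
      exact hfz
  let e1 := LinearEquiv.ofBijective umap hubij
  let e2 := LinearEquiv.ofBijective vmap hvbij
  refine ⟨e1.symm.trans e2, ?_⟩
  intro g f z z' hz'
  set h : H := e1.symm (Ideal.Quotient.mk (grIdeal F Z) f) with hhdef
  have hmkh : Ideal.Quotient.mk (grIdeal F Z) (h : MvPolynomial (Fin n) F)
      = Ideal.Quotient.mk (grIdeal F Z) f := by
    have h2 := e1.apply_symm_apply (Ideal.Quotient.mk (grIdeal F Z) f)
    rw [← hhdef] at h2
    rw [← h2]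
    rfl
  have hfh : f - (h : MvPolynomial (Fin n) F) ∈ grIdeal F Z :=
    (Ideal.Quotient.mk_eq_mk_iff_sub_mem _ _).1 hmkh.symm
  have hrh_mem : MvPolynomial.rename (⇑(φ g)) (h : MvPolynomial (Fin n) F) ∈ H := by
    have := hHstable g _ h.2
    exact this
  have hsymm2 : e1.symm (Ideal.Quotient.mk (grIdeal F Z)
      (MvPolynomial.rename (⇑(φ g)) f))
      = ⟨MvPolynomial.rename (⇑(φ g)) (h : MvPolynomial (Fin n) F), hrh_mem⟩ := by
    rw [LinearEquiv.symm_apply_eq]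
    have hsub2 : MvPolynomial.rename (⇑(φ g)) f
        - MvPolynomial.rename (⇑(φ g)) (h : MvPolynomial (Fin n) F) ∈ grIdeal F Z := by
      rw [← map_sub]
      exact aux_J_stable φ hZstable g hfh
    have : e1 ⟨MvPolynomial.rename (⇑(φ g)) (h : MvPolynomial (Fin n) F), hrh_mem⟩
        = Ideal.Quotient.mk (grIdeal F Z)
          (MvPolynomial.rename (⇑(φ g)) (h : MvPolynomial (Fin n) F)) := rfl
    rw [this]
    exact (Ideal.Quotient.mk_eq_mk_iff_sub_mem _ _).2 hsub2
  show e2 (e1.symm (Ideal.Quotient.mk (grIdeal F Z)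
      (MvPolynomial.rename (⇑(φ g)) f))) z
    = e2 (e1.symm (Ideal.Quotient.mk (grIdeal F Z) f)) z'
  rw [hsymm2, ← hhdef]
  show MvPolynomial.eval (z : Fin n → F)
      (MvPolynomial.rename (⇑(φ g)) (h : MvPolynomial (Fin n) F))
    = MvPolynomial.eval (z' : Fin n → F) (h : MvPolynomial (Fin n) F)
  rw [MvPolynomial.eval_rename, hz']
  rfl
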